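/- The terminal space S(M) of a commutative monoid M is quasi-compact: for every family {C_λ}_{λ∈Λ} of closed subsets of the terminal space with ⋂_{λ∈Λ} C_λ = ∅, there is a finite subset {λ_1, …, λ_n} ⊆ Λ with ⋂_{i=1}^n C_{λ_i} = ∅. -/
import Mathlib


/-- An ideal of a commutative monoid `M`: a subset closed under
multiplication by arbitrary elements of `M`. -/
def IsIdealM {M : Type*} [CommMonoid M] (I : Set M) : Prop :=
  ∀ x ∈ I, ∀ m : M, x * m ∈ I

/-- A strongly irreducible ideal: a proper ideal `I` such that for all ideals
`J`, `K`, if `J ∩ K ⊆ I` then `J ⊆ I` or `K ⊆ I`. -/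
def IsStronglyIrr {M : Type*} [CommMonoid M] (I : Set M) : Prop :=
  IsIdealM I ∧ I ≠ Set.univ ∧
    ∀ J K : Set M, IsIdealM J → IsIdealM K → J ∩ K ⊆ I → J ⊆ I ∨ K ⊆ I

/-- A prime ideal of a commutative monoid. -/
def IsPrimeIdealM {M : Type*} [CommMonoid M] (P : Set M) : Prop :=
  IsIdealM P ∧ P ≠ Set.univ ∧ ∀ x y : M, x * y ∈ P → x ∈ P ∨ y ∈ P

/-- A maximal ideal of a commutative monoid: a proper ideal maximal among
proper ideals. -/
def IsMaximalIdealM {M : Type*} [CommMonoid M] (I : Set M) : Prop :=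
  IsIdealM I ∧ I ≠ Set.univ ∧
    ∀ J : Set M, IsIdealM J → J ≠ Set.univ → I ⊆ J → J = I

/-- `SIr M` is the set (type) of strongly irreducible ideals of `M`. -/
structure SIr (M : Type*) [CommMonoid M] where
  carrier : Set M
  strongly_irr : IsStronglyIrr carrier

namespace SIr

variable {M : Type*} [CommMonoid M]

@[ext] theorem ext {I J : SIr M} (h : I.carrier = J.carrier) : I = J := by
  cases I; cases J; simpa using h

/-- `KK X = ⋂_{I ∈ X} I`, the kernel of a set of strongly irreducible ideals. -/
def KK (X : Set (SIr M)) : Set M := ⋂ I ∈ X, I.carrier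

/-- The hull-kernel operator `HK`: for nonempty `X`,
`HK X = {J ∈ S(M) : K(X) ⊆ J}`, and `HK ∅ = ∅`. -/
def HK (X : Set (SIr M)) : Set (SIr M) :=
  {J : SIr M | X.Nonempty ∧ KK X ⊆ J.carrier}

theorem HK_empty : HK (∅ : Set (SIr M)) = ∅ := by
  ext J
  simp [HK, Set.not_nonempty_empty]

theorem mem_HK_of_nonempty {X : Set (SIr M)} (hX : X.Nonempty) {J : SIr M} :
    J ∈ HK X ↔ KK X ⊆ J.carrier :=
  ⟨fun h => h.2, fun h => ⟨hX, h⟩⟩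

theorem KK_antitone {X X' : Set (SIr M)} (h : X ⊆ X') : KK X' ⊆ KK X := by
  intro m hm
  simp only [KK, Set.mem_iInter] at hm ⊢
  exact fun I hI => hm I (h hI)

theorem KK_isIdeal (X : Set (SIr M)) : IsIdealM (KK X) := by
  intro x hx m
  simp only [KK, Set.mem_iInter] at hx ⊢
  exact fun I hI => I.strongly_irr.1 x (hx I hI) m

theorem subset_HK (X : Set (SIr M)) : X ⊆ HK X := by
  intro J hJ
  refine ⟨⟨J, hJ⟩, fun m hm => ?_⟩
  simp only [KK, Set.mem_iInter] at hm
  exact hm J hJ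

theorem HK_mono {X X' : Set (SIr M)} (h : X ⊆ X') : HK X ⊆ HK X' := by
  rintro J ⟨hne, hsub⟩
  exact ⟨hne.mono h, (KK_antitone h).trans hsub⟩

theorem HK_idem (X : Set (SIr M)) : HK (HK X) = HK X := by
  refine Set.Subset.antisymm ?_ (subset_HK _)
  rintro J ⟨hne, hsub⟩
  obtain ⟨I, hI⟩ := hne
  refine ⟨hI.1, Set.Subset.trans ?_ hsub⟩
  intro m hm
  simp only [KK, Set.mem_iInter]
  exact fun L hL => hL.2 hm

theorem HK_union (X X' : Set (SIr M)) : HK (X ∪ X') = HK X ∪ HK X' := by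
  rcases X.eq_empty_or_nonempty with rfl | hX
  · rw [Set.empty_union, HK_empty, Set.empty_union]
  rcases X'.eq_empty_or_nonempty with rfl | hX'
  · rw [Set.union_empty, HK_empty, Set.union_empty]
  refine Set.Subset.antisymm ?_
    (Set.union_subset (HK_mono Set.subset_union_left)
      (HK_mono Set.subset_union_right))
  rintro J ⟨-, hsub⟩
  have hKK : KK X ∩ KK X' ⊆ J.carrier := by
    refine Set.Subset.trans ?_ hsub
    intro m hm
    simp only [KK, Set.mem_iInter, Set.mem_inter_iff] at hm ⊢
    rintro I (hI | hI)
    · exact hm.1 I hI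
    · exact hm.2 I hI
  rcases J.strongly_irr.2.2 (KK X) (KK X') (KK_isIdeal X) (KK_isIdeal X') hKK with h | h
  · exact Or.inl ⟨hX, h⟩
  · exact Or.inr ⟨hX', h⟩

/-- The terminal-space (Zariski) topology on `SIr M`: the closed sets are
exactly the sets of the form `HK X`. -/
instance instTopologicalSpace : TopologicalSpace (SIr M) :=
  TopologicalSpace.ofClosed (Set.range HK)
    ⟨∅, HK_empty⟩
    (fun A hA => by
      refine ⟨⋂₀ A, Set.Subset.antisymm (Set.subset_sInter fun C hC => ?_) (subset_HK _)⟩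
      obtain ⟨Y, hY⟩ := hA hC
      calc HK (⋂₀ A) ⊆ HK C := HK_mono (Set.sInter_subset_of_mem hC)
        _ = HK (HK Y) := by rw [hY]
        _ = HK Y := HK_idem Y
        _ = C := hY)
    (fun A hA B hB => by
      obtain ⟨Y, hY⟩ := hA
      obtain ⟨Z, hZ⟩ := hB
      exact ⟨Y ∪ Z, by rw [HK_union, hY, hZ]⟩)

theorem isClosed_iff {C : Set (SIr M)} : IsClosed C ↔ ∃ X, HK X = C := by
  rw [← isOpen_compl_iff]
  show Cᶜᶜ ∈ Set.range HK ↔ _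
  rw [compl_compl]
  exact Iff.rfl

end SIr

/-- Every proper ideal is contained in a strongly irreducible ideal. -/
theorem exists_sirr_superset {M : Type*} [CommMonoid M] {I : Set M}
    (hI : IsIdealM I) (h1 : (1 : M) ∉ I) :
    ∃ P : SIr M, I ⊆ P.carrier := by
  obtain ⟨m, hm⟩ := zorn_subset_nonempty {J : Set M | IsIdealM J ∧ (1 : M) ∉ J ∧ I ⊆ J}
    (fun c hc hchain hne => by
      refine ⟨⋃₀ c, ⟨?_, ?_, ?_⟩, fun s hs => Set.subset_sUnion_of_mem hs⟩
      · rintro x ⟨J, hJ, hxJ⟩ a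
        exact ⟨J, hJ, (hc hJ).1 x hxJ a⟩
      · rintro ⟨J, hJ, h1J⟩
        exact (hc hJ).2.1 h1J
      · obtain ⟨J, hJ⟩ := hne
        exact (hc hJ).2.2.trans (Set.subset_sUnion_of_mem hJ)) I ⟨hI, h1, subset_rfl⟩
  obtain ⟨hmI0, hmax⟩ := hm
  obtain ⟨hmid, hm1, hmI⟩ := hmax.prop
  have hproper : m ≠ Set.univ := fun h => hm1 (h ▸ Set.mem_univ 1)
  refine ⟨⟨m, hmid, hproper, fun J K hJ hK hJK => ?_⟩, hmI⟩
  by_contra hcon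
  push_neg at hcon
  have key : ∀ L : Set M, IsIdealM L → ¬ L ⊆ m → (1 : M) ∈ L := by
    intro L hL hLm
    by_contra h1L
    have : m ∪ L ∈ {J : Set M | IsIdealM J ∧ (1 : M) ∉ J ∧ I ⊆ J} := by
      refine ⟨?_, ?_, hmI.trans Set.subset_union_left⟩
      · rintro x (hx | hx) a
        · exact Or.inl (hmid x hx a)
        · exact Or.inr (hL x hx a)
      · rintro (h | h)
        · exact hm1 h
        · exact h1L h
    have := hmax.2 this Set.subset_union_left
    exact hLm (Set.subset_union_right.trans this)
  exact hm1 (hJK ⟨key J hJ hcon.1, key K hK hcon.2⟩)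

/-- the terminal space is quasi-compact. -/
theorem terminal_compactSpace (M : Type*) [CommMonoid M] :
    CompactSpace (SIr M) := by
  rw [← isCompact_univ_iff]
  apply isCompact_of_finite_subfamily_closed
  intro ι Z hZc hZe
  rw [Set.univ_inter] at hZe
  by_cases hemp : ∃ i, Z i = ∅
  · obtain ⟨i, hi⟩ := hemp
    refine ⟨{i}, ?_⟩
    simp [hi]
  push_neg at hemp
  choose X hX using fun i => SIr.isClosed_iff.mp (hZc i)
  -- each X i nonempty
  have hXne : ∀ i, (X i).Nonempty := by
    intro i
    rcases Set.eq_empty_or_nonempty (X i) with h | h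
    · exact absurd (by rw [← hX i, h, SIr.HK_empty]) (hemp i).ne_empty
    · exact h
  -- 1 ∉ KK (X i) for all i
  have h1 : ∀ i, (1 : M) ∉ SIr.KK (X i) := by
    intro i h1i
    have huniv : SIr.KK (X i) = Set.univ := by
      apply Set.eq_univ_of_forall
      intro a
      have := SIr.KK_isIdeal (X i) 1 h1i a
      simpa using this
    have : Z i = ∅ := by
      rw [← hX i]
      ext J
      simp only [SIr.HK, Set.mem_setOf_eq, Set.mem_empty_iff_false, iff_false, not_and]
      intro _
      rw [huniv]
      intro hsub
      exact J.strongly_irr.2.1 (Set.eq_univ_of_univ_subset hsub)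
    exact (hemp i).ne_empty this
  -- the union ideal
  set I : Set M := ⋃ i, SIr.KK (X i) with hIdef
  by_cases hι : Nonempty ι
  · have hIideal : IsIdealM I := by
      rintro x hx a
      obtain ⟨s, ⟨i, rfl⟩, hxs⟩ := hx
      exact Set.mem_iUnion.mpr ⟨i, SIr.KK_isIdeal (X i) x hxs a⟩
    have hI1 : (1 : M) ∉ I := by
      rintro h
      obtain ⟨s, ⟨i, rfl⟩, hs⟩ := h
      exact h1 i hs
    obtain ⟨P, hP⟩ := exists_sirr_superset hIideal hI1
    have : P ∈ ⋂ i, Z i := by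
      refine Set.mem_iInter.mpr fun i => ?_
      rw [← hX i]
      exact ⟨hXne i, (Set.subset_iUnion (fun i => SIr.KK (X i)) i).trans hP⟩
    rw [hZe] at this
    exact this.elim
  · refine ⟨∅, ?_⟩
    have : (⋂ i, Z i) = Set.univ := by
      rw [Set.iInter_eq_univ]
      exact fun i => absurd ⟨i⟩ hι
    rw [this] at hZe
    simp [hZe]
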